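/- Let ν ≥ 1, let a ∈ ℂ \ {0}, let z₁,…,z_m ∈ ℂ be pairwise distinct with |z_k| ≤ 1 for all k, let μ₁,…,μ_m ≥ 1 be integers with μ₁+⋯+μ_m = ν, and let ε ∈ (0,1/4]. Set P_k := a·(X−z_k)^{μ_k−1}·∏_{j≠k}(X−z_j)^{μ_j} and, for 1 ≤ j ≤ μ_k−1, Q_{k,j} := a·(X−z_k)^{j−1}·∏_{ℓ≠k}(X−z_ℓ)^{μ_ℓ} (so each Q_{k,j} has degree ≤ ν−2). Then the Hermitian form q_d on ℂ^ν defined by q_d(w⁰,…,w^{ν−1}) := Σ_{k=1}^m μ_k·(1−|z_k|²)·|P_k(T)w⁰|² + Σ_{k=1}^m Σ_{j=1}^{μ_k−1} ε^{μ_k−j}·(1−|z_k|²)^{2(μ_k−j)}·( |Q_{k,j}(T)w⁰|² − |Q_{k,j}(T)w¹|² ) is nonnegative, where Q_{k,j}(T)w¹ := Σ_i q_i·w^{1+i} for Q_{k,j} = Σ_i q_i X^i (well defined since deg Q_{k,j} ≤ ν−2). -/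

import Mathlib

open Polynomial

/-- `P_k = a (X − z_k)^{μ_k−1} ∏_{j≠k} (X − z_j)^{μ_j}`. -/
noncomputable def Pkpoly (m : ℕ) (a : ℂ) (z : Fin m → ℂ) (μ : Fin m → ℕ) (k : Fin m) :
    Polynomial ℂ :=
  C a * (X - C (z k)) ^ (μ k - 1) * ∏ j ∈ Finset.univ.erase k, (X - C (z j)) ^ (μ j)

/-- `Q_{k,j} = a (X − z_k)^{j−1} ∏_{ℓ≠k} (X − z_ℓ)^{μ_ℓ}`. -/
noncomputable def Qkjpoly (m : ℕ) (a : ℂ) (z : Fin m → ℂ) (μ : Fin m → ℕ) (k : Fin m)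
    (j : ℕ) : Polynomial ℂ :=
  C a * (X - C (z k)) ^ (j - 1) * ∏ l ∈ Finset.univ.erase k, (X - C (z l)) ^ (μ l)

/-- The action `R(T)w⁰ = Σ_i r_i w^i` of a polynomial `R = Σ_i r_i X^i` of degree
`≤ ν−1` on a vector `(w⁰,…,w^{ν−1}) ∈ ℂ^ν`. -/
noncomputable def polyActV (ν : ℕ) (R : Polynomial ℂ) (w : Fin ν → ℂ) : ℂ :=
  ∑ i : Fin ν, R.coeff i * w i

/-- The shifted action `R(T)w¹ = Σ_i r_i w^{1+i}` of a polynomial `R = Σ_i r_i X^i`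
of degree `≤ ν−2` on a vector `(w⁰,…,w^{ν−1}) ∈ ℂ^ν`. -/
noncomputable def polyActVShift (ν : ℕ) (R : Polynomial ℂ) (w : Fin ν → ℂ) : ℂ :=
  ∑ i : Fin (ν - 1), R.coeff i.1 * w ⟨i.1 + 1, by have := i.isLt; omega⟩

lemma polyActV_add (ν : ℕ) (P Q : Polynomial ℂ) (w : Fin ν → ℂ) :
    polyActV ν (P + Q) w = polyActV ν P w + polyActV ν Q w := by
  simp [polyActV, add_mul, Finset.sum_add_distrib]

lemma polyActV_C_mul (ν : ℕ) (c : ℂ) (P : Polynomial ℂ) (w : Fin ν → ℂ) :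
    polyActV ν (C c * P) w = c * polyActV ν P w := by
  simp [polyActV, coeff_C_mul, Finset.mul_sum, mul_assoc]

lemma shift_eq (ν : ℕ) (hν : 1 ≤ ν) (R : Polynomial ℂ) (w : Fin ν → ℂ) :
    polyActVShift ν R w = polyActV ν (X * R) w := by
  obtain ⟨ν', rfl⟩ : ∃ ν', ν = ν' + 1 := ⟨ν - 1, by omega⟩
  simp only [polyActV, polyActVShift]
  rw [Fin.sum_univ_succ]
  simp [Polynomial.coeff_X_mul, Fin.succ]

lemma Qsucc (m : ℕ) (a : ℂ) (z : Fin m → ℂ) (μ : Fin m → ℕ) (k : Fin m)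
    (j : ℕ) (hj : 1 ≤ j) :
    X * Qkjpoly m a z μ k j
      = Qkjpoly m a z μ k (j+1) + C (z k) * Qkjpoly m a z μ k j := by
  obtain ⟨j', rfl⟩ : ∃ j', j = j' + 1 := ⟨j - 1, by omega⟩
  simp only [Qkjpoly, Nat.add_sub_cancel]
  ring

lemma cross (zz u v : ℂ) (r : ℝ) (hr : 0 < r) (hrz : r = 1 - ‖zz‖ ^ 2) :
    (r/2) * ‖u‖ ^ 2 - (2/r) * ‖v‖ ^ 2 ≤
      ‖u‖ ^ 2 - ‖v + zz * u‖ ^ 2 := by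
  set A := ‖u‖ with hA
  set B := ‖v‖ with hB
  set c := ‖zz‖ with hc'
  set CC := ‖v + zz * u‖ with hC
  have h1 : CC ≤ B + c * A := by
    simpa [hC, hB, hc', hA, map_mul, norm_mul] using norm_add_le v (zz*u)
  have hc : 0 ≤ c := norm_nonneg zz
  have hu : 0 ≤ A := norm_nonneg u
  have hv : 0 ≤ B := norm_nonneg v
  have h0 : 0 ≤ CC := norm_nonneg (v + zz * u)
  have h2 : CC^2 ≤ (B + c*A)^2 := by nlinarith
  have h3 : r * CC^2 ≤ r * (B^2 + 2*(c*A*B) + (1-r)*A^2) := by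
    have hexp : (B + c*A)^2 = B^2 + 2*(c*A*B) + (1-r)*A^2 := by
      have hc2 : c^2 = 1 - r := by linarith
      linear_combination A^2 * hc2
    rw [← hexp]
    exact mul_le_mul_of_nonneg_left h2 hr.le
  have h5 : c^2*B^2 = (1-r)*B^2 := by
    rw [show c^2 = 1 - r by linarith]
  rw [← mul_le_mul_iff_of_pos_left hr]
  have ht : r * ((2/r) * B ^ 2) = 2 * B ^ 2 := by
    field_simp
  rw [mul_sub, mul_sub, ht]
  nlinarith [h3, sq_nonneg (r*A - 2*c*B), h5, mul_nonneg hr.le (sq_nonneg B)]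

lemma keysum (ε r : ℝ) (hε : 0 ≤ ε) (hε4 : ε ≤ 1/4) (hr : 0 < r) (x : ℕ → ℝ)
    (hx : ∀ j, 0 ≤ x j) (n : ℕ) :
    -(2*ε*r) * x (n+1) ≤
      ∑ j ∈ Finset.Icc 1 n, (ε*r^2)^(n+1-j) * ((r/2)*x j - (2/r)*x (j+1)) := by
  induction n with
  | zero =>
    rw [Finset.Icc_eq_empty (by omega), Finset.sum_empty]
    nlinarith [mul_nonneg (mul_nonneg hε hr.le) (hx 1)]
  | succ n IH =>
    rw [Finset.sum_Icc_succ_top (by omega : 1 ≤ n+1)]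
    have hre : ∀ j ∈ Finset.Icc 1 n,
        (ε*r^2)^(n+1+1-j) * ((r/2)*x j - (2/r)*x (j+1))
          = (ε*r^2) * ((ε*r^2)^(n+1-j) * ((r/2)*x j - (2/r)*x (j+1))) := by
      intro j hj
      have : n+1+1-j = (n+1-j)+1 := by
        rw [Finset.mem_Icc] at hj; omega
      rw [this, pow_succ]; ring
    rw [Finset.sum_congr rfl hre, ← Finset.mul_sum]
    have h2 : (n+1+1-(n+1)) = 1 := by omega
    rw [h2, pow_one]
    have hm : (ε*r^2) * (-(2*ε*r) * x (n+1)) ≤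
        (ε*r^2) * ∑ j ∈ Finset.Icc 1 n, (ε*r^2)^(n+1-j) * ((r/2)*x j - (2/r)*x (j+1)) :=
      mul_le_mul_of_nonneg_left IH (by positivity)
    have ht : (ε*r^2) * ((2/r) * x (n+2)) = 2*ε*r * x (n+2) := by
      field_simp
    have h6 : 0 ≤ ε*r^3*(1/2 - 2*ε)*x (n+1) := by
      have h7 : 0 ≤ (1/2 - 2*ε : ℝ) := by linarith
      have h8 : (0:ℝ) ≤ r^3 := by positivity
      exact mul_nonneg (mul_nonneg (mul_nonneg hε h8) h7) (hx (n+1))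
    nlinarith [hm, ht, h6]

/-- nonnegativity, for `0 < ε ≤ 1/4`, of the dissipation form
`q_d(w) = Σ_k μ_k (1−|z_k|²) |P_k(T)w⁰|²
  + Σ_k Σ_{j=1}^{μ_k−1} ε^{μ_k−j} (1−|z_k|²)^{2(μ_k−j)} (|Q_{k,j}(T)w⁰|² − |Q_{k,j}(T)w¹|²)`. -/
theorem stmt_3 (ν m : ℕ) (hν : 1 ≤ ν) (a : ℂ) (ha : a ≠ 0)
    (z : Fin m → ℂ) (hz : Function.Injective z)
    (μ : Fin m → ℕ) (hμ : ∀ k, 1 ≤ μ k) (hsum : ∑ k : Fin m, μ k = ν)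
    (hzdisk : ∀ k, ‖z k‖ ≤ 1)
    (ε : ℝ) (hε : 0 < ε) (hε' : ε ≤ 1 / 4) :
    ∀ w : Fin ν → ℂ,
      0 ≤ ∑ k : Fin m, (μ k : ℝ) * (1 - ‖z k‖ ^ 2)
              * ‖polyActV ν (Pkpoly m a z μ k) w‖ ^ 2
          + ∑ k : Fin m, ∑ j ∈ Finset.Icc 1 (μ k - 1),
              ε ^ (μ k - j) * (1 - ‖z k‖ ^ 2) ^ (2 * (μ k - j))
                * (‖polyActV ν (Qkjpoly m a z μ k j) w‖ ^ 2
                    - ‖polyActVShift ν (Qkjpoly m a z μ k j) w‖ ^ 2) := by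

  intro w
  rw [← Finset.sum_add_distrib]
  apply Finset.sum_nonneg
  intro k _
  set r : ℝ := 1 - ‖z k‖ ^ 2 with hr_def
  have hr0 : 0 ≤ r := by
    have h := hzdisk k
    have h' := norm_nonneg (z k)
    nlinarith
  rcases hr0.eq_or_lt with hr | hr
  · -- r = 0 : everything vanishes
    rw [← hr]
    apply add_nonneg
    · simp
    · refine Finset.sum_nonneg fun j hj => ?_
      rw [Finset.mem_Icc] at hj
      rw [zero_pow (show 2 * (μ k - j) ≠ 0 by omega), mul_zero, zero_mul]
  · -- r > 0
    have hsh : ∀ j, 1 ≤ j → polyActVShift ν (Qkjpoly m a z μ k j) w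
        = polyActV ν (Qkjpoly m a z μ k (j+1)) w + z k * polyActV ν (Qkjpoly m a z μ k j) w := by
      intro j hj
      rw [shift_eq ν hν, Qsucc m a z μ k j hj, polyActV_add, polyActV_C_mul]
    have hkey := keysum ε r hε.le hε' hr
      (fun j => ‖polyActV ν (Qkjpoly m a z μ k j) w‖ ^ 2)
      (fun j => sq_nonneg _) (μ k - 1)
    rw [show μ k - 1 + 1 = μ k from by have := hμ k; omega] at hkey
    have hterm : ∀ j ∈ Finset.Icc 1 (μ k - 1),
        (ε*r^2)^(μ k - j) * ((r/2) * ‖polyActV ν (Qkjpoly m a z μ k j) w‖ ^ 2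
            - (2/r) * ‖polyActV ν (Qkjpoly m a z μ k (j+1)) w‖ ^ 2)
          ≤ ε ^ (μ k - j) * r ^ (2 * (μ k - j))
              * (‖polyActV ν (Qkjpoly m a z μ k j) w‖ ^ 2
                  - ‖polyActVShift ν (Qkjpoly m a z μ k j) w‖ ^ 2) := by
      intro j hj
      rw [Finset.mem_Icc] at hj
      rw [hsh j hj.1]
      rw [show ε ^ (μ k - j) * r ^ (2 * (μ k - j)) = (ε*r^2)^(μ k - j) from by
        rw [mul_pow, ← pow_mul]]
      refine mul_le_mul_of_nonneg_left ?_ (by positivity)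
      exact cross (z k) (polyActV ν (Qkjpoly m a z μ k j) w)
        (polyActV ν (Qkjpoly m a z μ k (j+1)) w) r hr hr_def
    have hsum2 := Finset.sum_le_sum hterm
    have hP : ‖polyActV ν (Pkpoly m a z μ k) w‖
        = ‖polyActV ν (Qkjpoly m a z μ k (μ k)) w‖ := rfl
    rw [hP]
    have hμ1 : (1:ℝ) ≤ (μ k : ℝ) := by exact_mod_cast hμ k
    have hfin : 0 ≤ ((μ k : ℝ) - 2*ε) * r
        * ‖polyActV ν (Qkjpoly m a z μ k (μ k)) w‖ ^ 2 := by
      refine mul_nonneg (mul_nonneg (by linarith) hr.le) (sq_nonneg _)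
    linarith [hkey.trans hsum2]
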